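/- arXiv:2103.05611 — 9 statements merged into one kernel-verified Lean document; each statement's English description precedes it below -/
import Mathlib

section
/- For q ∈ (0,1) and p ∈ [q, 1], the inequality q/(1 − √((1−p)(1−q)))² ≥ (1−q)/(1 − (1−q)(1−p)) holds if and only if √(1−p) ≥ (2(1−q)−1)/√(1−q). In particular, if q ≥ 1/2 the inequality holds for all p ∈ [q, 1], and if q ≤ 1/2 it holds exactly when p ≤ 1 − (1−2q)²/(1−q). -/
lemma stmt6_key (q p : ℝ) (hq0 : 0 < q) (hq1 : q < 1) (hpq : q ≤ p) (hp1 : p ≤ 1) :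
    ((1 - q)/(1 - (1 - q)*(1 - p)) ≤ q / (1 - Real.sqrt ((1 - p)*(1 - q)))^2 ↔
      (2*(1 - q) - 1)/Real.sqrt (1 - q) ≤ Real.sqrt (1 - p)) := by
  set a := Real.sqrt (1 - p) with ha_def
  set b := Real.sqrt (1 - q) with hb_def
  have hb : 0 < b := Real.sqrt_pos.2 (by linarith)
  have ha : 0 ≤ a := Real.sqrt_nonneg _
  have hb2 : b^2 = 1 - q := Real.sq_sqrt (by linarith)
  have ha2 : a^2 = 1 - p := Real.sq_sqrt (by linarith)
  have hab : a ≤ b := Real.sqrt_le_sqrt (by linarith)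
  have habl : a * b < 1 := by nlinarith
  have hs : Real.sqrt ((1 - p)*(1 - q)) = a * b := Real.sqrt_mul (by linarith) _
  rw [hs]
  have hd1 : (0:ℝ) < (1 - a*b)^2 := pow_pos (by linarith) 2
  have hd2 : (0:ℝ) < 1 - (1 - q)*(1 - p) := by nlinarith
  rw [div_le_div_iff₀ hd2 hd1, div_le_iff₀ hb]
  have habsq : (a*b)^2 = (1 - p)*(1 - q) := by rw [mul_pow, ha2, hb2]
  constructor
  · intro h
    by_contra hc
    push_neg at hc
    nlinarith [mul_pos (show (0:ℝ) < 1 - a*b by linarith)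
      (show (0:ℝ) < 2*(1 - q) - 1 - a*b by linarith), habsq, mul_nonneg ha hb.le]
  · intro h
    nlinarith [mul_nonneg (show (0:ℝ) ≤ 1 - a*b by linarith)
      (show (0:ℝ) ≤ a*b - (2*(1 - q) - 1) by linarith), habsq, mul_nonneg ha hb.le]

/-- For q ∈ (0,1) and p ∈ [q,1],
q/(1 − √((1−p)(1−q)))² ≥ (1−q)/(1 − (1−q)(1−p)) iff √(1−p) ≥ (2(1−q)−1)/√(1−q).
If q ≥ 1/2 the inequality holds for all p ∈ [q,1]; if q ≤ 1/2 it holds exactly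
when p ≤ 1 − (1−2q)²/(1−q). -/
theorem stmt_6 (q : ℝ) (hq : q ∈ Set.Ioo (0:ℝ) 1) :
    (∀ p ∈ Set.Icc q 1,
      ((1 - q)/(1 - (1 - q)*(1 - p)) ≤ q / (1 - Real.sqrt ((1 - p)*(1 - q)))^2 ↔
        (2*(1 - q) - 1)/Real.sqrt (1 - q) ≤ Real.sqrt (1 - p))) ∧
    (1/2 ≤ q → ∀ p ∈ Set.Icc q 1,
      (1 - q)/(1 - (1 - q)*(1 - p)) ≤ q / (1 - Real.sqrt ((1 - p)*(1 - q)))^2) ∧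
    (q ≤ 1/2 → ∀ p ∈ Set.Icc q 1,
      ((1 - q)/(1 - (1 - q)*(1 - p)) ≤ q / (1 - Real.sqrt ((1 - p)*(1 - q)))^2 ↔
        p ≤ 1 - (1 - 2*q)^2/(1 - q))) := by
  obtain ⟨hq0, hq1⟩ := hq
  have hb : 0 < Real.sqrt (1 - q) := Real.sqrt_pos.2 (by linarith)
  have hb2 : (Real.sqrt (1 - q))^2 = 1 - q := Real.sq_sqrt (by linarith)
  refine ⟨fun p hp => stmt6_key q p hq0 hq1 hp.1 hp.2, ?_, ?_⟩
  · intro hq2 p hp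
    rw [stmt6_key q p hq0 hq1 hp.1 hp.2]
    have : (2*(1 - q) - 1)/Real.sqrt (1 - q) ≤ 0 :=
      div_nonpos_of_nonpos_of_nonneg (by linarith) hb.le
    exact this.trans (Real.sqrt_nonneg _)
  · intro hq2 p hp
    obtain ⟨hpq, hp1⟩ := hp
    rw [stmt6_key q p hq0 hq1 hpq hp1, div_le_iff₀ hb]
    have ha : 0 ≤ Real.sqrt (1 - p) := Real.sqrt_nonneg _
    have ha2 : (Real.sqrt (1 - p))^2 = 1 - p := Real.sq_sqrt (by linarith)
    have hqpos : (0:ℝ) < 1 - q := by linarith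
    have hiff : (p ≤ 1 - (1 - 2*q)^2/(1 - q)) ↔ (1 - 2*q)^2 ≤ (1 - p)*(1 - q) := by
      constructor
      · intro h
        have h2 := (div_le_iff₀ hqpos).1 (by linarith : (1 - 2*q)^2/(1 - q) ≤ 1 - p)
        nlinarith [h2]
      · intro h
        have h2 := (div_le_iff₀ hqpos).2 (by nlinarith : (1 - 2*q)^2 ≤ (1 - p)*(1 - q))
        linarith [h2]
    rw [hiff]
    constructor
    · intro h
      nlinarith [mul_nonneg ha hb.le]
    · intro h
      nlinarith [mul_nonneg ha hb.le, sq_nonneg (Real.sqrt (1 - p) * Real.sqrt (1 - q) - (1 - 2*q))]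
end

section
/- For q ∈ (0, 1/4], the supremum over p ∈ [0,1] of min{ p·q/(1 − √((1−p)(1−q)))², p, p(1−q)/(1 − (1−q)(1−p)) } equals 2√q/(1+√q), attained at p = 2√q/(1+√q). -/
/-- For q ∈ (0, 1/4], the supremum over p ∈ [0,1] of
min{ p·q/(1 − √((1−p)(1−q)))², p, p(1−q)/(1 − (1−q)(1−p)) }
equals 2√q/(1+√q), attained at p = 2√q/(1+√q). -/
theorem stmt_8 (q : ℝ) (hq : q ∈ Set.Ioc (0:ℝ) (1/4))
    (f : ℝ → ℝ)
    (hf : ∀ p : ℝ, f p = min (min (p * q / (1 - Real.sqrt ((1 - p)*(1 - q)))^2) p)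
      (p*(1 - q)/(1 - (1 - q)*(1 - p)))) :
    2*Real.sqrt q/(1 + Real.sqrt q) ∈ Set.Icc (0:ℝ) 1 ∧
    f (2*Real.sqrt q/(1 + Real.sqrt q)) = 2*Real.sqrt q/(1 + Real.sqrt q) ∧
    ∀ p ∈ Set.Icc (0:ℝ) 1, f p ≤ 2*Real.sqrt q/(1 + Real.sqrt q) := by
  obtain ⟨hq0, hq4⟩ := hq
  set s := Real.sqrt q with hs_def
  have hs2 : s^2 = q := Real.sq_sqrt hq0.le
  have hs0 : 0 < s := Real.sqrt_pos.mpr hq0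
  have hs12 : s ≤ 1/2 := by
    have : Real.sqrt q ≤ Real.sqrt (1/4) := Real.sqrt_le_sqrt hq4
    have h4 : Real.sqrt (1/4) = 1/2 := by
      rw [show (1/4 : ℝ) = (1/2)^2 by norm_num, Real.sqrt_sq (by norm_num)]
    linarith [this, h4.le]
  have hs1 : s < 1 := by linarith
  have h1s : (0:ℝ) < 1 + s := by linarith
  set P := 2*s/(1+s) with hP_def
  have hP0 : 0 < P := by positivity
  have hP1 : P ≤ 1 := by
    rw [hP_def, div_le_one h1s]; linarith
  have hPlt1 : P < 1 := by
    rw [hP_def, div_lt_one h1s]; linarith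
  have hq1 : q < 1 := by linarith
  refine ⟨⟨hP0.le, hP1⟩, ?_, ?_⟩
  · -- f P = P
    have hsqrt : Real.sqrt ((1 - P)*(1 - q)) = 1 - s := by
      have he : (1 - P)*(1 - q) = (1-s)^2 := by
        rw [← hs2, hP_def]
        field_simp
        ring
      rw [he, Real.sqrt_sq (by linarith)]
    rw [hf, hsqrt]
    have h1 : P * q / (1 - (1-s))^2 = P := by
      rw [← hs2]
      have : (1 - (1-s)) = s := by ring
      rw [this]
      field_simp
    have hden : 1 - (1 - q)*(1 - P) = s*(2-s) := by
      rw [← hs2, hP_def]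
      field_simp
      ring
    have h3 : P ≤ P*(1 - q)/(1 - (1 - q)*(1 - P)) := by
      rw [hden, ← hs2]
      rw [le_div_iff₀ (by nlinarith)]
      nlinarith
    rw [h1, min_self, min_eq_left h3]
  · -- upper bound
    intro p hp
    obtain ⟨hp0, hp1⟩ := hp
    by_cases hc : p ≤ P
    · calc f p ≤ p := by
            rw [hf]
            exact le_trans (min_le_left _ _) (min_le_right _ _)
        _ ≤ P := hc
    · push_neg at hc
      set u := Real.sqrt ((1 - p)*(1 - q)) with hu_def
      have hu0 : 0 ≤ u := Real.sqrt_nonneg _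
      have hu2 : u^2 = (1 - p)*(1 - s^2) := by
        rw [hu_def, Real.sq_sqrt (by nlinarith), hs2]
      have hule : u ≤ 1 - s := by
        have h1 : (1 - p)*(1 - q) ≤ (1-s)^2 := by
          have hpP : (1 - p)*(1 - q) ≤ (1 - P)*(1 - q) := by nlinarith
          have he : (1 - P)*(1 - q) = (1-s)^2 := by
            rw [← hs2, hP_def]; field_simp; ring
          linarith
        calc u ≤ Real.sqrt ((1-s)^2) := Real.sqrt_le_sqrt h1
          _ = 1 - s := Real.sqrt_sq (by linarith)
      have hupos : 0 < 1 - u := by linarith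
      have hkey : p * q / (1 - u)^2 ≤ P := by
        rw [← hs2, hP_def, div_le_div_iff₀ (by positivity) h1s]
        -- p * s^2 * (1+s) ≤ 2s * (1-u)^2
        have hfact : 0 ≤ (1 - s - u) * ((1-s)*(2+s) - (2-s)*u) := by
          apply mul_nonneg (by linarith)
          nlinarith
        nlinarith [sq_nonneg u, sq_nonneg (1-u), mul_pos hs0 hs0]
      calc f p ≤ p * q / (1 - u)^2 := by
            rw [hf]
            exact le_trans (min_le_left _ _) (min_le_left _ _)
        _ ≤ P := hkey
end

section
/- For q ∈ [1/4, 1/2], the supremum over p ∈ [0,1] of min{ p·q/(1 − √((1−p)(1−q)))², p, p(1−q)/(1 − (1−q)(1−p)) } equals (3−4q)/(4(1−q)), attained at p = q(3−4q)/(1−q). -/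
/-- For q ∈ [1/4, 1/2], the supremum over p ∈ [0,1] of
min{ p·q/(1 − √((1−p)(1−q)))², p, p(1−q)/(1 − (1−q)(1−p)) }
equals (3−4q)/(4(1−q)), attained at p = q(3−4q)/(1−q). -/
theorem stmt_9 (q : ℝ) (hq : q ∈ Set.Icc (1/4 : ℝ) (1/2))
    (f : ℝ → ℝ)
    (hf : ∀ p : ℝ, f p = min (min (p * q / (1 - Real.sqrt ((1 - p)*(1 - q)))^2) p)
      (p*(1 - q)/(1 - (1 - q)*(1 - p)))) :
    q*(3 - 4*q)/(1 - q) ∈ Set.Icc (0:ℝ) 1 ∧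
    f (q*(3 - 4*q)/(1 - q)) = (3 - 4*q)/(4*(1 - q)) ∧
    ∀ p ∈ Set.Icc (0:ℝ) 1, f p ≤ (3 - 4*q)/(4*(1 - q)) := by
  obtain ⟨hq1, hq2⟩ := hq
  have hq0 : (0:ℝ) < q := by linarith
  have h1q : (0:ℝ) < 1 - q := by linarith
  have h34 : (0:ℝ) < 3 - 4*q := by linarith
  set P : ℝ := q*(3 - 4*q)/(1 - q) with hP
  set M : ℝ := (3 - 4*q)/(4*(1 - q)) with hM
  have hP0 : 0 ≤ P := by
    rw [hP]; positivity
  have hP1 : P ≤ 1 := by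
    rw [hP, div_le_one h1q]; nlinarith [sq_nonneg (1 - 2*q)]
  have hMP : M ≤ P := by
    rw [hM, hP, div_le_div_iff₀ (by linarith) h1q]
    nlinarith [mul_nonneg (mul_nonneg (by linarith : (0:ℝ) ≤ 4*q - 1) h34.le) h1q.le]
  have hid : (1 - P)*(1 - q) = (1 - 2*q)^2 := by
    rw [hP]; field_simp; ring
  refine ⟨⟨hP0, hP1⟩, ?_, ?_⟩
  · rw [hf]
    have hs : Real.sqrt ((1 - P)*(1 - q)) = 1 - 2*q := by
      rw [hid, Real.sqrt_sq (by linarith)]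
    rw [hs]
    have e1 : P * q / (1 - (1 - 2*q))^2 = M := by
      rw [hP, hM]; field_simp; ring
    have hd3 : 1 - (1 - q)*(1 - P) = 4*q*(1 - q) := by
      rw [hP]; field_simp; ring
    have e3 : P*(1 - q)/(1 - (1 - q)*(1 - P)) = M := by
      rw [hd3, hP, hM]; field_simp
    rw [e1, e3, min_eq_left hMP, min_self]
  · intro p hp
    obtain ⟨hp0, hp1⟩ := hp
    rw [hf]
    by_cases hcase : p ≤ P
    · have hd : 0 < 1 - (1 - q)*(1 - p) := by nlinarith
      have hpP : p*(1 - q) ≤ q*(3 - 4*q) := by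
        rw [hP, le_div_iff₀ h1q] at hcase
        linarith
      calc min (min (p * q / (1 - Real.sqrt ((1 - p)*(1 - q)))^2) p)
            (p*(1 - q)/(1 - (1 - q)*(1 - p)))
          ≤ p*(1 - q)/(1 - (1 - q)*(1 - p)) := min_le_right _ _
        _ ≤ M := by
            rw [hM, div_le_div_iff₀ hd (by linarith)]
            nlinarith
    · push_neg at hcase
      have hPp : P ≤ p := hcase.le
      set s := Real.sqrt ((1 - p)*(1 - q)) with hsdef
      have hs0 : 0 ≤ s := Real.sqrt_nonneg _
      have hs2 : s^2 = (1 - p)*(1 - q) := Real.sq_sqrt (by nlinarith)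
      have hsle : s ≤ 1 - 2*q := by
        have h1 : (1 - p)*(1 - q) ≤ (1 - 2*q)^2 := by
          have h2 := mul_le_mul_of_nonneg_right (by linarith : 1 - p ≤ 1 - P) h1q.le
          linarith [hid]
        calc s ≤ Real.sqrt ((1 - 2*q)^2) := Real.sqrt_le_sqrt h1
          _ = 1 - 2*q := Real.sqrt_sq (by linarith)
      have hden : 0 < (1 - s)^2 := by
        have h1s : (0:ℝ) < 1 - s := by linarith
        exact pow_pos h1s 2
      calc min (min (p * q / (1 - s)^2) p) (p*(1 - q)/(1 - (1 - q)*(1 - p)))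
          ≤ p * q / (1 - s)^2 := (min_le_left _ _).trans (min_le_left _ _)
        _ ≤ M := by
            rw [hM, div_le_div_iff₀ hden (by linarith)]
            nlinarith [hs2, mul_nonneg (by linarith : (0:ℝ) ≤ 1 - 2*q - s)
              (by linarith : (0:ℝ) ≤ 3 - 2*q - 3*s)]
end

section
/- For q ∈ [e^{-1/e}, 1], the supremum over p ∈ [1/(1+log(1/q)), 1] of min{ (q/e)·μ_q(p)·e^{μ_q(p)}·p, p, p·e·log(1/q)·q^p } equals e·q·log(1/q), attained at p = 1. -/
/-- For q ∈ [e^{-1/e}, 1], the supremum over p ∈ [1/(1+log(1/q)), 1]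
of min{ (q/e)·μ_q(p)·e^{μ_q(p)}·p, p, p·e·log(1/q)·q^p } equals e·q·log(1/q),
attained at p = 1. -/
theorem stmt_12 (q : ℝ) (hq : q ∈ Set.Icc (Real.exp (-(Real.exp 1)⁻¹)) 1)
    (η : ℝ) (hη : η = Real.log (1/q))
    (μ : ℝ → ℝ)
    (hμ : ∀ p : ℝ, μ p = (2 + η*(1 - p) + Real.sqrt ((η*(1 - p))^2 + 4*η*(1 - p)))/2)
    (f : ℝ → ℝ)
    (hf : ∀ p : ℝ, f p = min (min ((q/Real.exp 1) * μ p * Real.exp (μ p) * p) p)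
      (p * Real.exp 1 * Real.log (1/q) * q ^ p)) :
    f 1 = Real.exp 1 * q * Real.log (1/q) ∧
    ∀ p ∈ Set.Icc (1/(1 + Real.log (1/q))) 1, f p ≤ Real.exp 1 * q * Real.log (1/q) := by
  obtain ⟨hq1, hq2⟩ := hq
  have hq0 : 0 < q := lt_of_lt_of_le (Real.exp_pos _) hq1
  have hlogq : Real.log (1/q) = -Real.log q := by rw [one_div, Real.log_inv]
  have hη' : η = -Real.log q := by rw [hη, hlogq]
  have hη0 : 0 ≤ η := by
    rw [hη']; simpa using Real.log_nonpos hq0.le hq2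
  have he2 : (2:ℝ) ≤ Real.exp 1 := by
    have := Real.add_one_le_exp (1:ℝ); linarith
  have hepos : (0:ℝ) < Real.exp 1 := Real.exp_pos 1
  have hηe : η * Real.exp 1 ≤ 1 := by
    have h1 : -(Real.exp 1)⁻¹ ≤ Real.log q := by
      calc -(Real.exp 1)⁻¹ = Real.log (Real.exp (-(Real.exp 1)⁻¹)) := (Real.log_exp _).symm
        _ ≤ Real.log q := Real.log_le_log (Real.exp_pos _) hq1
    have h2 : η ≤ (Real.exp 1)⁻¹ := by rw [hη']; linarith
    calc η * Real.exp 1 ≤ (Real.exp 1)⁻¹ * Real.exp 1 :=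
          mul_le_mul_of_nonneg_right h2 hepos.le
      _ = 1 := inv_mul_cancel₀ hepos.ne'
  have hη1 : η ≤ 1 := by nlinarith
  -- key: for p in the interval, p * q^p ≤ q
  have key : ∀ p : ℝ, 0 < p → p ≤ 1 → p * q ^ p ≤ q := by
    intro p hp0 hp1
    have hlog1 : Real.log p ≤ p - 1 := Real.log_le_sub_one_of_pos hp0
    have hlog2 : Real.log p ≤ η * (p - 1) := by nlinarith
    have hple : p ≤ Real.exp (η * (p - 1)) := by
      calc p = Real.exp (Real.log p) := (Real.exp_log hp0).symm
        _ ≤ Real.exp (η * (p - 1)) := Real.exp_le_exp.mpr hlog2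
    have hrw : Real.exp (η * (p - 1)) = q ^ (1 - p) := by
      rw [Real.rpow_def_of_pos hq0]
      congr 1
      rw [hη'] at *
      ring
    have h3 : p * q ^ p ≤ q ^ (1 - p) * q ^ p := by
      rw [← hrw]
      exact mul_le_mul_of_nonneg_right hple (Real.rpow_nonneg hq0.le p)
    calc p * q ^ p ≤ q ^ (1 - p) * q ^ p := h3
      _ = q ^ ((1 - p) + p) := (Real.rpow_add hq0 _ _).symm
      _ = q := by norm_num
  constructor
  · -- f 1
    have hμ1 : μ 1 = 1 := by rw [hμ]; norm_num
    rw [hf, hμ1, hlogq, Real.rpow_one]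
    have e1 : q / Real.exp 1 * 1 * Real.exp 1 * 1 = q := by
      field_simp
    rw [e1]
    have h4 : 1 * Real.exp 1 * -Real.log q * q ≤ q := by
      have : Real.exp 1 * -Real.log q ≤ 1 := by rw [← hη']; nlinarith
      nlinarith
    rw [min_eq_left hq2, min_eq_right h4]
    rw [hη'] at *
    ring
  · intro p hp
    obtain ⟨hpl, hpu⟩ := hp
    have hden : 0 < 1 + Real.log (1/q) := by rw [hlogq, ← hη']; linarith
    have hp0 : 0 < p := lt_of_lt_of_le (by positivity) hpl
    have h5 : p * q ^ p ≤ q := key p hp0 hpu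
    calc f p ≤ p * Real.exp 1 * Real.log (1/q) * q ^ p := by
          rw [hf]; exact min_le_right _ _
      _ = Real.exp 1 * η * (p * q ^ p) := by rw [hη]; ring
      _ ≤ Real.exp 1 * η * q := by
          apply mul_le_mul_of_nonneg_left h5 (by positivity)
      _ = Real.exp 1 * q * Real.log (1/q) := by rw [hη]; ring
end

section
/- For any price mechanism given by a cdf Ψ on [0,∞) and any scalar γ > 1 (with incumbent price w = 1 and conversion rate q ∈ (0,1)): the deterministic mechanism posting price γ > 1 achieves worst-case competitive ratio 0 against the class of regular distributions with conversion rate q at price 1. Concretely, there exists a regular distribution F with F̄(1) = q, opt(F) > 0, and γ·F̄(γ) = 0. -/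
/-- A complementary cdf of a regular distribution on [0,∞): nonincreasing, valued
in [0,1], vanishing at infinity, with a density (differentiable) except possibly at
the maximum M of its support, and nondecreasing virtual value v − F̄(v)/f(v) where
f = −F̄'. -/
def IsRegularCCDF (Fbar : ℝ → ℝ) : Prop :=
  AntitoneOn Fbar (Set.Ici 0) ∧ (∀ v ∈ Set.Ici (0:ℝ), Fbar v ∈ Set.Icc (0:ℝ) 1) ∧
  Filter.Tendsto Fbar Filter.atTop (nhds 0) ∧
  ∃ M : ℝ, 0 < M ∧ (∀ v : ℝ, M < v → Fbar v = 0) ∧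
    (∀ v ∈ Set.Ioo (0:ℝ) M, DifferentiableAt ℝ Fbar v) ∧
    MonotoneOn (fun v => v - Fbar v / (-(deriv Fbar v))) (Set.Ioo 0 M)

/-- For any γ > 1 (incumbent price w = 1, conversion rate q ∈ (0,1)),
the deterministic mechanism posting price γ has worst-case competitive ratio 0
against regular distributions with conversion rate q at price 1: there is a regular
distribution F with F̄(1) = q, opt(F) = sup_{p ≥ 0} p·F̄(p) > 0, and γ·F̄(γ) = 0. -/
theorem stmt_14 (γ q : ℝ) (hγ : 1 < γ) (hq : q ∈ Set.Ioo (0:ℝ) 1) :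
    ∃ Fbar : ℝ → ℝ, IsRegularCCDF Fbar ∧ Fbar 1 = q ∧
      0 < sSup ((fun p => p * Fbar p) '' Set.Ici 0) ∧ γ * Fbar γ = 0 := by
  obtain ⟨hq0, hq1⟩ := hq
  set c : ℝ := (1 - q) / q with hc
  have hcpos : 0 < c := div_pos (by linarith) hq0
  set T : ℝ := (1 + γ) / 2 with hT
  have hT1 : 1 < T := by simp only [hT]; linarith
  have hTγ : T < γ := by simp only [hT]; linarith
  set Fbar : ℝ → ℝ := fun v => if v ≤ T then (1 + c * v)⁻¹ else 0 with hF
  have hpos : ∀ v : ℝ, 0 ≤ v → 0 < 1 + c * v := fun v hv => by nlinarith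
  have hFval : ∀ v : ℝ, v ≤ T → Fbar v = (1 + c * v)⁻¹ := fun v hv => if_pos hv
  have hFzero : ∀ v : ℝ, T < v → Fbar v = 0 := fun v hv => if_neg (not_le.mpr hv)
  have hF1 : Fbar 1 = q := by
    rw [hFval 1 hT1.le, hc]
    field_simp
    ring
  refine ⟨Fbar, ⟨?_, ?_, ?_, T, by linarith, hFzero, ?_, ?_⟩, hF1, ?_, ?_⟩
  · -- antitone
    intro a ha b hb hab
    simp only [Set.mem_Ici] at ha hb
    by_cases hbT : b ≤ T
    · rw [hFval a (hab.trans hbT), hFval b hbT]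
      exact inv_anti₀ (hpos a ha) (by nlinarith)
    · rw [hFzero b (not_le.mp hbT)]
      by_cases haT : a ≤ T
      · rw [hFval a haT]; positivity
      · rw [hFzero a (not_le.mp haT)]
  · -- values in [0,1]
    intro v hv
    simp only [Set.mem_Ici] at hv
    by_cases hvT : v ≤ T
    · rw [hFval v hvT]
      constructor
      · positivity
      · rw [inv_le_one_iff₀]; right; nlinarith
    · rw [hFzero v (not_le.mp hvT)]; exact ⟨le_refl 0, zero_le_one⟩
  · -- tendsto 0
    have this : Fbar =ᶠ[Filter.atTop] fun _ => (0:ℝ) := by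
      filter_upwards [Filter.eventually_gt_atTop T] with v hv using hFzero v hv
    exact Filter.Tendsto.congr' this.symm tendsto_const_nhds
  · -- differentiable on (0,T)
    intro v hv
    have hne : 1 + c * v ≠ 0 := (hpos v hv.1.le).ne'
    have heq : Fbar =ᶠ[nhds v] fun x => (1 + c * x)⁻¹ := by
      filter_upwards [Iio_mem_nhds hv.2] with x hx using hFval x (le_of_lt hx)
    exact (((differentiableAt_const (1:ℝ)).add
      ((differentiableAt_const c).mul differentiableAt_id)).inv hne).congr_of_eventuallyEq heq
  · -- monotone virtual value
    have key : ∀ v ∈ Set.Ioo (0:ℝ) T, v - Fbar v / (-(deriv Fbar v)) = -(1/c) := by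
      intro v hv
      have hne : 1 + c * v ≠ 0 := (hpos v hv.1.le).ne'
      have heq : Fbar =ᶠ[nhds v] fun x => (1 + c * x)⁻¹ := by
        filter_upwards [Iio_mem_nhds hv.2] with x hx using hFval x (le_of_lt hx)
      have h1 : HasDerivAt (fun x : ℝ => 1 + c * x) c v := by
        simpa using ((hasDerivAt_id v).const_mul c).const_add 1
      have h2 : HasDerivAt (fun x : ℝ => (1 + c * x)⁻¹) (-c / (1 + c * v) ^ 2) v := h1.inv hne
      have hd : deriv Fbar v = -c / (1 + c * v) ^ 2 := by
        rw [Filter.EventuallyEq.deriv_eq heq, h2.deriv]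
      rw [hd, hFval v hv.2.le]
      field_simp
      ring
    intro a ha b hb _
    simp only [key a ha, key b hb, le_refl]
  · -- sSup positive
    have hmem : q ∈ (fun p => p * Fbar p) '' Set.Ici 0 :=
      ⟨1, Set.mem_Ici.mpr zero_le_one, by show (1:ℝ) * Fbar 1 = q; rw [hF1, one_mul]⟩
    have hbdd : BddAbove ((fun p => p * Fbar p) '' Set.Ici 0) := by
      refine ⟨T, ?_⟩
      rintro x ⟨p, hp, rfl⟩
      simp only [Set.mem_Ici] at hp
      show p * Fbar p ≤ T
      by_cases hpT : p ≤ T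
      · have h1 : Fbar p ≤ 1 := by
          rw [hFval p hpT, inv_le_one_iff₀]; right; nlinarith
        calc p * Fbar p ≤ p * 1 := mul_le_mul_of_nonneg_left h1 hp
          _ = p := mul_one p
          _ ≤ T := hpT
      · rw [hFzero p (not_le.mp hpT), mul_zero]; linarith
    exact lt_of_lt_of_le hq0 (le_csSup hbdd hmem)
  · rw [hFzero γ hTγ, mul_zero]
end

section
/- Let q ∈ (0,1), K ∈ ℕ with K ≥ 1, ε = q^{1/K}, and a_k = ε^k for k = 1,…,K. For indices 1 ≤ i ≤ k ≤ K one has Σ_{i=1}^{k} a_k/a_i = Σ_{i=0}^{k-1} ε^i ≤ 1/(1−ε), and for the remaining terms Σ_{i=k+1}^{K} (ε^{-i} − 1)/((ε^{-k} − 1) + (1/q)(1−ε)) ≤ 1/(1−ε)². Consequently (1/K)·max_{1≤k≤K}[Σ_{i=1}^{k} ε^{k-i} + Σ_{i=k+1}^{K} (ε^{-i}−1)/((ε^{-k}−1)+(1/q)(1−ε))] ≤ (1/K)(1/(1−ε) + 1/(1−ε)²). -/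
/-- With ε = q^{1/K} and a_k = ε^k: for 1 ≤ k ≤ K,
Σ_{i=1}^{k} a_k/a_i = Σ_{i=0}^{k-1} ε^i ≤ 1/(1−ε),
Σ_{i=k+1}^{K} (ε^{-i} − 1)/((ε^{-k} − 1) + (1/q)(1−ε)) ≤ 1/(1−ε)², and consequently
(1/K)·[Σ_{i=1}^{k} ε^{k-i} + Σ_{i=k+1}^{K} (ε^{-i}−1)/((ε^{-k}−1)+(1/q)(1−ε))]
  ≤ (1/K)(1/(1−ε) + 1/(1−ε)²). -/
theorem stmt_15 (q : ℝ) (hq : q ∈ Set.Ioo (0:ℝ) 1) (K : ℕ) (hK : 1 ≤ K)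
    (ε : ℝ) (hε : ε = q ^ ((K : ℝ)⁻¹)) :
    ∀ k : ℕ, 1 ≤ k → k ≤ K →
      ((∑ i ∈ Finset.Icc 1 k, ε^k / ε^i) = (∑ i ∈ Finset.range k, ε^i) ∧
        (∑ i ∈ Finset.range k, ε^i) ≤ 1/(1 - ε)) ∧
      (∑ i ∈ Finset.Icc (k+1) K, ((ε^i)⁻¹ - 1)/(((ε^k)⁻¹ - 1) + (1/q)*(1 - ε)))
        ≤ 1/(1 - ε)^2 ∧
      (1/(K:ℝ)) * ((∑ i ∈ Finset.Icc 1 k, ε^(k - i)) +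
          ∑ i ∈ Finset.Icc (k+1) K, ((ε^i)⁻¹ - 1)/(((ε^k)⁻¹ - 1) + (1/q)*(1 - ε)))
        ≤ (1/(K:ℝ)) * (1/(1 - ε) + 1/(1 - ε)^2) := by
  obtain ⟨hq0, hq1⟩ := hq
  have hK0 : (0:ℝ) < K := by exact_mod_cast hK
  have hε0 : 0 < ε := by rw [hε]; positivity
  have hε1 : ε < 1 := by
    rw [hε]; exact Real.rpow_lt_one hq0.le hq1 (by positivity)
  have hεK : ε ^ K = q := by
    rw [hε, ← Real.rpow_natCast (q ^ _) K, ← Real.rpow_mul hq0.le,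
      inv_mul_cancel₀ (ne_of_gt hK0), Real.rpow_one]
  have h1ε : 0 < 1 - ε := by linarith
  intro k hk1 hkK
  have geom : ∀ n : ℕ, (∑ i ∈ Finset.range n, ε^i) ≤ 1/(1-ε) := by
    intro n
    have hne : (1:ℝ) - ε ≠ 0 := ne_of_gt h1ε
    have hne2 : ε - 1 ≠ 0 := by intro h; apply hne; linarith
    have e : (ε^n - 1)/(ε - 1) = (1 - ε^n)/(1 - ε) := by
      field_simp
      ring
    rw [geom_sum_eq (ne_of_lt hε1) n, e]
    gcongr
    nlinarith [pow_nonneg hε0.le n]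
  -- reindexing lemma
  have hre : (∑ i ∈ Finset.Icc 1 k, ε^(k-i)) = ∑ i ∈ Finset.range k, ε^i := by
    apply Finset.sum_nbij' (i := fun i => k - i) (j := fun j => k - j)
    · intro a ha
      simp only [Finset.mem_Icc] at ha
      simp only [Finset.mem_range]
      omega
    · intro a ha
      simp only [Finset.mem_range] at ha
      simp only [Finset.mem_Icc]
      omega
    · intro a ha
      simp only [Finset.mem_Icc] at ha
      omega
    · intro a ha
      simp only [Finset.mem_range] at ha
      omega
    · intro a ha
      rfl
  have heq1 : (∑ i ∈ Finset.Icc 1 k, ε^k / ε^i) = ∑ i ∈ Finset.Icc 1 k, ε^(k-i) := by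
    apply Finset.sum_congr rfl
    intro i hi
    simp only [Finset.mem_Icc] at hi
    rw [pow_sub₀ ε (ne_of_gt hε0) hi.2, div_eq_mul_inv]
  -- Part 2
  set D : ℝ := ((ε^k)⁻¹ - 1) + (1/q)*(1 - ε) with hD
  have hεk1 : (1:ℝ) ≤ (ε^k)⁻¹ := by
    rw [le_inv_comm₀ one_pos (pow_pos hε0 k), inv_one]
    exact pow_le_one₀ hε0.le hε1.le
  have hd0 : (0:ℝ) < (1/q)*(1 - ε) := by positivity
  have hDd : (1/q)*(1 - ε) ≤ D := by rw [hD]; linarith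
  have hDpos : 0 < D := lt_of_lt_of_le hd0 hDd
  have hterm : ∀ i ∈ Finset.Icc (k+1) K,
      ((ε^i)⁻¹ - 1)/D ≤ ε^(K-i) / (1 - ε) := by
    intro i hi
    simp only [Finset.mem_Icc] at hi
    have h1 : ((ε^i)⁻¹ - 1)/D ≤ (ε^i)⁻¹/((1/q)*(1 - ε)) := by
      apply div_le_div₀ (by positivity) (by linarith) hd0 hDd
    have h2 : (ε^i)⁻¹/((1/q)*(1 - ε)) = ε^(K-i) / (1 - ε) := by
      rw [pow_sub₀ ε (ne_of_gt hε0) hi.2, hεK]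
      field_simp
    linarith [h1, h2.le]
  have hsum2 : (∑ i ∈ Finset.Icc (k+1) K, ((ε^i)⁻¹ - 1)/D)
      ≤ ∑ i ∈ Finset.Icc (k+1) K, ε^(K-i) / (1 - ε) :=
    Finset.sum_le_sum hterm
  have hre2 : (∑ i ∈ Finset.Icc (k+1) K, ε^(K-i)) = ∑ j ∈ Finset.range (K-k), ε^j := by
    apply Finset.sum_nbij' (i := fun i => K - i) (j := fun j => K - j)
    · intro a ha
      simp only [Finset.mem_Icc] at ha
      simp only [Finset.mem_range]
      omega
    · intro a ha
      simp only [Finset.mem_range] at ha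
      simp only [Finset.mem_Icc]
      omega
    · intro a ha
      simp only [Finset.mem_Icc] at ha
      omega
    · intro a ha
      simp only [Finset.mem_range] at ha
      omega
    · intro a ha
      rfl
  have hpart2 : (∑ i ∈ Finset.Icc (k+1) K, ((ε^i)⁻¹ - 1)/D) ≤ 1/(1 - ε)^2 := by
    calc (∑ i ∈ Finset.Icc (k+1) K, ((ε^i)⁻¹ - 1)/D)
        ≤ ∑ i ∈ Finset.Icc (k+1) K, ε^(K-i) / (1 - ε) := hsum2
      _ = (∑ i ∈ Finset.Icc (k+1) K, ε^(K-i)) / (1 - ε) := by rw [Finset.sum_div]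
      _ = (∑ j ∈ Finset.range (K-k), ε^j) / (1 - ε) := by rw [hre2]
      _ ≤ (1/(1 - ε)) / (1 - ε) := by
          gcongr
          exact geom (K-k)
      _ = 1/(1 - ε)^2 := by field_simp
  refine ⟨⟨by rw [heq1, hre], geom k⟩, hpart2, ?_⟩
  apply mul_le_mul_of_nonneg_left ?_ (by positivity)
  have := geom k
  rw [hre]
  linarith
end

section
/- Let q ∈ (0,1) and consider the price density dΨ(u) = 1/(u·log(1/q)) on [q, 1] (zero elsewhere). Then for every x ∈ [q, 1], (1/x)·[∫_q^x du + ∫_x^1 (1 + (1/q − 1)(u−x)/(1−x))^{-1} du] ≥ (1−q)/log(1/q). -/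
/-- With the price density dΨ(u) = 1/(u·log(1/q)) on [q,1],
for every x ∈ [q,1] the left-regime ratio satisfies
(1/(x·log(1/q)))·[∫_q^x du + ∫_x^1 (1 + (1/q − 1)(u−x)/(1−x))⁻¹ du]
  ≥ (1−q)/log(1/q). -/
theorem stmt_16 (q : ℝ) (hq : q ∈ Set.Ioo (0:ℝ) 1) :
    ∀ x ∈ Set.Icc q 1,
      (1 - q)/Real.log (1/q) ≤
        (1/(x * Real.log (1/q))) *
          ((∫ _u in q..x, (1:ℝ)) +
            ∫ u in x..(1:ℝ), (1 + (1/q - 1)*(u - x)/(1 - x))⁻¹) := by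
  obtain ⟨hq0, hq1⟩ := hq
  have hL : 0 < Real.log (1/q) := Real.log_pos (by
    rw [one_div]
    exact (one_lt_inv₀ hq0).2 hq1)
  have hLq : 1 - q ≤ Real.log (1/q) := by
    have := Real.log_le_sub_one_of_pos hq0
    rw [one_div, Real.log_inv]; linarith
  intro x hx
  obtain ⟨hxq, hx1⟩ := hx
  have hx0 : 0 < x := lt_of_lt_of_le hq0 hxq
  rw [intervalIntegral.integral_const, smul_eq_mul, mul_one]
  rcases eq_or_lt_of_le hx1 with h1 | hxlt
  · subst h1
    rw [intervalIntegral.integral_same]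
    simp only [one_mul, add_zero, one_div_mul_eq_div]
    exact le_refl _
  · -- x < 1
    set c : ℝ := (1/q - 1)/(1 - x) with hc_def
    have h1x : 0 < 1 - x := by linarith
    have hq' : 0 < 1/q - 1 := by
      rw [one_div]
      have : 1 < q⁻¹ := (one_lt_inv₀ hq0).2 hq1
      linarith
    have hc : 0 < c := div_pos hq' h1x
    have hint : (∫ u in x..(1:ℝ), (1 + (1/q - 1)*(u - x)/(1 - x))⁻¹)
        = c⁻¹ * Real.log (1/q) := by
      have heq : ∀ u : ℝ, (1 + (1/q - 1)*(u - x)/(1 - x))⁻¹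
          = (fun y : ℝ => y⁻¹) (c * u + (1 - c * x)) := by
        intro u
        simp only [hc_def]
        congr 1
        field_simp
        ring
      rw [intervalIntegral.integral_congr (fun u _ => heq u)]
      rw [intervalIntegral.integral_comp_mul_add (fun y : ℝ => y⁻¹) (ne_of_gt hc) (1 - c*x)]
      have e1 : c * x + (1 - c * x) = 1 := by ring
      have e2 : c * 1 + (1 - c * x) = 1/q := by
        simp only [hc_def]
        field_simp
        ring
      rw [e1, e2, smul_eq_mul]
      congr 1
      rw [integral_inv]
      · rw [div_one]
      · intro h
        rcases Set.mem_uIcc.1 h with ⟨h1, _⟩ | ⟨h1, _⟩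
        · linarith
        · have : 0 < 1/q := by positivity
          linarith
    rw [hint]
    have hcinv : c⁻¹ = q * (1 - x) / (1 - q) := by
      rw [hc_def, inv_div,
        div_eq_div_iff (ne_of_gt hq') (ne_of_gt (by linarith : (0:ℝ) < 1 - q))]
      field_simp
    have key : x * (1 - q) ≤ (x - q) + c⁻¹ * Real.log (1/q) := by
      rw [hcinv]
      have h1 : q * (1 - x) / (1 - q) * (1 - q) ≤ q * (1 - x) / (1 - q) * Real.log (1/q) := by
        apply mul_le_mul_of_nonneg_left hLq
        apply div_nonneg
        · nlinarith
        · linarith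
      have h2 : q * (1 - x) / (1 - q) * (1 - q) = q * (1 - x) :=
        div_mul_cancel₀ _ (ne_of_gt (by linarith : (0:ℝ) < 1 - q))
      nlinarith
    have hrw : (1 - q)/Real.log (1/q) = (1/(x * Real.log (1/q))) * (x * (1 - q)) := by
      field_simp
    rw [hrw]
    apply mul_le_mul_of_nonneg_left key
    exact one_div_nonneg.2 (le_of_lt (mul_pos hx0 hL))
end

section
/- Let q ∈ (0,1) and dΨ(u) = 1/(u·log(1/q)) on [q,1]. Then ∫_q^1 (1 + (1/q−1)u)^{-1}·(1/(u·log(1/q)))·u du = (1/(1/q − 1))·(1 − log(2−q)/log(1/q)), and since sup_{x≥1} x/(1+(1/q−1)x) = 1/(1/q−1), the right-regime ratio is at least 1 − log(2−q)/log(1/q). For q ∈ (0, 1 − 1/√2], both min{(1−q)/log(1/q), 1 − log(2−q)/log(1/q)} are at least log 2/log(1/q). -/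
/-- With dΨ(u) = 1/(u·log(1/q)) on [q,1]:
∫_q^1 (1+(1/q−1)u)⁻¹·(1/(u·log(1/q)))·u du = (1/(1/q−1))·(1 − log(2−q)/log(1/q));
sup_{x ≥ 1} x/(1+(1/q−1)x) = 1/(1/q−1), so the right-regime ratio is at least
1 − log(2−q)/log(1/q) for each x ≥ 1; and for q ∈ (0, 1−1/√2], both
(1−q)/log(1/q) and 1 − log(2−q)/log(1/q) are at least log 2/log(1/q). -/
theorem stmt_17 (q : ℝ) (hq : q ∈ Set.Ioo (0:ℝ) 1)
    (I : ℝ)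
    (hI : I = ∫ u in q..(1:ℝ), (1 + (1/q - 1)*u)⁻¹ * (1/(u * Real.log (1/q))) * u) :
    I = (1/(1/q - 1)) * (1 - Real.log (2 - q)/Real.log (1/q)) ∧
    sSup ((fun x => x/(1 + (1/q - 1)*x)) '' Set.Ici 1) = 1/(1/q - 1) ∧
    (∀ x : ℝ, 1 ≤ x →
      1 - Real.log (2 - q)/Real.log (1/q) ≤ I / (x/(1 + (1/q - 1)*x))) ∧
    (q ≤ 1 - 1/Real.sqrt 2 →
      Real.log 2/Real.log (1/q) ≤ (1 - q)/Real.log (1/q) ∧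
      Real.log 2/Real.log (1/q) ≤ 1 - Real.log (2 - q)/Real.log (1/q)) := by
  obtain ⟨hq0, hq1⟩ := hq
  have hq1' : 1 < 1/q := one_lt_one_div hq0 hq1
  set L : ℝ := Real.log (1/q) with hLdef
  set c : ℝ := 1/q - 1 with hc
  have hc0 : 0 < c := by rw [hc]; linarith
  have hL : 0 < L := Real.log_pos hq1'
  have hqle : q ≤ 1 := hq1.le
  -- key positivity on the interval
  have hpos : ∀ u ∈ Set.uIcc q (1:ℝ), 0 < u ∧ 0 < 1 + c*u := by
    intro u hu
    rw [Set.uIcc_of_le hqle] at hu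
    constructor
    · linarith [hu.1]
    · nlinarith [hu.1, hc0]
  -- Part 1: the integral
  have hIval : I = (1/c) * (1 - Real.log (2-q)/L) := by
    have h1 : I = ∫ u in q..(1:ℝ), (1/L) * (1 + c*u)⁻¹ := by
      rw [hI]
      apply intervalIntegral.integral_congr
      intro u hu
      obtain ⟨hu0, _⟩ := hpos u hu
      field_simp
    have h2 : (∫ u in q..(1:ℝ), (1/L) * (1 + c*u)⁻¹)
        = (1/(c*L)) * Real.log (1 + c*1) - (1/(c*L)) * Real.log (1 + c*q) := by
      refine intervalIntegral.integral_eq_sub_of_hasDerivAt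
        (f := fun u : ℝ => (1/(c*L)) * Real.log (1 + c*u)) ?_ ?_
      · intro u hu
        obtain ⟨hu0, hu1⟩ := hpos u hu
        have hd : HasDerivAt (fun v : ℝ => 1 + c*v) c u := by
          simpa using ((hasDerivAt_id u).const_mul c).const_add 1
        have hlog := (Real.hasDerivAt_log hu1.ne').comp u hd
        have := hlog.const_mul (1/(c*L))
        refine this.congr_deriv ?_
        field_simp
      · apply ContinuousOn.intervalIntegrable
        apply ContinuousOn.mul continuousOn_const
        apply ContinuousOn.inv₀
        · fun_prop
        · intro u hu; exact (hpos u hu).2.ne'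
    have e1 : 1 + c*1 = 1/q := by rw [hc]; ring
    have e2 : 1 + c*q = 2 - q := by rw [hc]; field_simp; ring
    rw [h1, h2, e1, e2, ← hLdef]
    field_simp
  have hRnn : 0 ≤ 1 - Real.log (2-q)/L := by
    have hle : 2 - q ≤ 1/q := by
      rw [le_div_iff₀ hq0]; nlinarith [sq_nonneg (1-q)]
    have h' : Real.log (2-q) ≤ L := by
      rw [hLdef]; exact Real.log_le_log (by linarith) hle
    have := (div_le_one hL).mpr h'
    linarith
  refine ⟨hIval, ?_, ?_, ?_⟩
  · -- Part 2: supremum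
    have hub : ∀ y ∈ (fun x => x/(1 + c*x)) '' Set.Ici 1, y ≤ 1/c := by
      rintro y ⟨x, hx, rfl⟩
      have hx1 : (1:ℝ) ≤ x := hx
      have hden : 0 < 1 + c*x := by nlinarith
      rw [div_le_div_iff₀ hden hc0]
      nlinarith
    have hbdd : BddAbove ((fun x => x/(1 + c*x)) '' Set.Ici 1) := ⟨1/c, hub⟩
    apply le_antisymm
    · exact csSup_le ((Set.nonempty_Ici).image _) hub
    · have htend : Filter.Tendsto (fun x : ℝ => x/(1 + c*x)) Filter.atTop (nhds (1/c)) := by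
        have h0 : Filter.Tendsto (fun x : ℝ => x⁻¹ + c) Filter.atTop (nhds (0 + c)) :=
          tendsto_inv_atTop_zero.add tendsto_const_nhds
        have h1 : Filter.Tendsto (fun x : ℝ => (x⁻¹ + c)⁻¹) Filter.atTop (nhds (0 + c)⁻¹) :=
          h0.inv₀ (by simpa using hc0.ne')
        have heq : (fun x : ℝ => (x⁻¹ + c)⁻¹) =ᶠ[Filter.atTop] fun x => x/(1 + c*x) := by
          filter_upwards [Filter.eventually_gt_atTop 0] with x hx
          rw [show x⁻¹ + c = (1 + c*x)/x by field_simp, inv_div]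
        simpa [one_div] using h1.congr' heq
      refine le_of_tendsto htend ?_
      filter_upwards [Filter.eventually_ge_atTop 1] with x hx
      exact le_csSup hbdd ⟨x, hx, rfl⟩
  · -- Part 3
    intro x hx
    have hx0 : (0:ℝ) < x := by linarith
    have hden : 0 < 1 + c*x := by nlinarith
    rw [div_div_eq_mul_div, le_div_iff₀ hx0, hIval]
    have key : (1/c) * (1 - Real.log (2-q)/L) * (1 + c*x)
        = (1 - Real.log (2-q)/L)/c + (1 - Real.log (2-q)/L)*x := by
      field_simp
    rw [key]
    have hdiv : 0 ≤ (1 - Real.log (2-q)/L)/c := div_nonneg hRnn hc0.le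
    linarith
  · -- Part 4
    intro hq4
    have hs2 : (0:ℝ) < Real.sqrt 2 := Real.sqrt_pos.mpr (by norm_num)
    have hsq : Real.sqrt 2 ^ 2 = 2 := Real.sq_sqrt (by norm_num)
    have hkey : 1 ≤ (1-q) * Real.sqrt 2 := by
      have : 1/Real.sqrt 2 ≤ 1 - q := by linarith
      calc (1:ℝ) = (1/Real.sqrt 2) * Real.sqrt 2 := by field_simp
        _ ≤ (1-q) * Real.sqrt 2 := by nlinarith
    have hquad : 1 ≤ 2*(1-q)^2 := by
      nlinarith [sq_nonneg ((1-q)*Real.sqrt 2 - 1)]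
    constructor
    · -- log 2 ≤ 1 - q
      have hs107 : Real.sqrt 2 ≤ 10/7 := by
        rw [show (10:ℝ)/7 = Real.sqrt ((10/7)^2) by rw [Real.sqrt_sq (by norm_num)]]
        exact Real.sqrt_le_sqrt (by norm_num)
      have h710 : (7:ℝ)/10 ≤ 1/Real.sqrt 2 := by
        rw [le_one_div (by norm_num) hs2]
        linarith
      have hlog2 : Real.log 2 ≤ 1 - q := by
        have := Real.log_two_lt_d9
        linarith
      gcongr
    · -- log 2 + log (2-q) ≤ L
      have hprod : Real.log 2 + Real.log (2-q) ≤ L := by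
        rw [← Real.log_mul (by norm_num) (by linarith)]
        apply Real.log_le_log (by nlinarith)
        rw [le_div_iff₀ hq0]
        nlinarith
      rw [le_sub_iff_add_le, ← add_div, div_le_one hL]
      exact hprod
end

section
/- Let q ∈ (1/2, 1) and let Rev(r) = r/(1 + (1/q − 1)r) for r ≥ 1 (the worst-case regular revenue at r). Define the probability measure dλ(r) = (1/log(1/(1−q)))·Rev'(r)/Rev(r) dr on [1, ∞). Then for every p ≥ 0, ∫ p·F̄_r(p)/Rev(r) dλ(r) ≤ (1/log(1/(1−q)))·(1 − (1/q − 1)·p·H̄₀(p)) ≤ 1/log(1/(1−q)), where H̄₀(p) = 1/(1 + (1/q−1)p) and F̄_r(p) = H̄₀(p) for p ≤ r and 0 for p > r. -/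
open MeasureTheory

/-- For q ∈ (1/2,1), Rev(r) = r/(1+(1/q−1)r), H̄₀(p) = (1+(1/q−1)p)⁻¹,
F̄_r(p) = H̄₀(p) for p ≤ r and 0 for p > r, and the probability density
dλ(r) = (1/log(1/(1−q)))·Rev'(r)/Rev(r) on [1,∞): for every p ≥ 0,
∫ p·F̄_r(p)/Rev(r) dλ(r) ≤ (1/log(1/(1−q)))·(1 − (1/q−1)·p·H̄₀(p)) ≤ 1/log(1/(1−q)). -/
theorem stmt_19 (q : ℝ) (hq : q ∈ Set.Ioo (1/2 : ℝ) 1)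
    (Rev : ℝ → ℝ) (hRev : ∀ r : ℝ, Rev r = r/(1 + (1/q - 1)*r))
    (Hbar : ℝ → ℝ) (hHbar : ∀ p : ℝ, Hbar p = (1 + (1/q - 1)*p)⁻¹)
    (Fbar : ℝ → ℝ → ℝ)
    (hFbar : ∀ r p : ℝ, Fbar r p = if p ≤ r then Hbar p else 0)
    (p : ℝ) (hp : 0 ≤ p) :
    (∫ r in Set.Ioi (1:ℝ),
        (p * Fbar r p / Rev r) * ((1/Real.log (1/(1 - q))) * deriv Rev r / Rev r))
      ≤ (1/Real.log (1/(1 - q))) * (1 - (1/q - 1) * p * Hbar p) ∧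
    (1/Real.log (1/(1 - q))) * (1 - (1/q - 1) * p * Hbar p)
      ≤ 1/Real.log (1/(1 - q)) := by
  obtain ⟨hq1, hq2⟩ := hq
  have hq0 : 0 < q := lt_trans (by norm_num) hq1
  set c : ℝ := 1/q - 1 with hc
  have hc0 : 0 < c := by
    have h1 : 1 < 1/q := by
      rw [lt_div_iff₀ hq0]; linarith
    rw [hc]; linarith
  have hlog : 0 < Real.log (1/(1 - q)) := by
    apply Real.log_pos
    rw [lt_div_iff₀ (by linarith : (0:ℝ) < 1 - q)]; linarith
  set K : ℝ := 1/Real.log (1/(1 - q)) with hKdef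
  have hK : 0 < K := by positivity
  have hcp : (0:ℝ) < 1 + c*p := by nlinarith
  have hHpos : 0 < Hbar p := by rw [hHbar]; positivity
  -- RHS simplification
  have hRHS : K * (1 - c * p * Hbar p) = K * Hbar p := by
    rw [hHbar]
    field_simp
    ring
  have hderiv : ∀ r ∈ Set.Ioi (1:ℝ), deriv Rev r = 1/(1 + c*r)^2 := by
    intro r hr
    have hr1 : (1:ℝ) < r := hr
    have hdenpos : 0 < 1 + c*r := by nlinarith
    have hne : (1 + c*r) ≠ 0 := ne_of_gt hdenpos
    have h2 : HasDerivAt (fun x : ℝ => 1 + c*x) c r := by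
      simpa using ((hasDerivAt_id r).const_mul c).const_add 1
    have h3 : HasDerivAt (fun x : ℝ => x/(1 + c*x))
        ((1*(1 + c*r) - r*c)/(1 + c*r)^2) r := (hasDerivAt_id r).div h2 hne
    have hfun : Rev = fun x : ℝ => x/(1 + c*x) := funext hRev
    rw [hfun, h3.deriv]
    field_simp
    ring
  set C : ℝ := K * p * Hbar p with hCdef
  have key : Set.EqOn
      (fun r => (p * Fbar r p / Rev r) * (K * deriv Rev r / Rev r))
      ((Set.Ici p).indicator (fun r => C * r ^ (-2:ℝ))) (Set.Ioi (1:ℝ)) := by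
    intro r hr
    have hr1 : (1:ℝ) < r := hr
    have hr0 : (0:ℝ) < r := by linarith
    have hdenpos : 0 < 1 + c*r := by nlinarith
    simp only [Set.indicator, Set.mem_Ici, hFbar, hRev, hderiv r hr]
    by_cases hpr : p ≤ r
    · simp only [hpr, if_true]
      rw [Real.rpow_neg hr0.le, show ((2:ℝ)) = ((2:ℕ):ℝ) by norm_num,
        Real.rpow_natCast]
      field_simp
      ring
    · simp [hpr]
  rw [setIntegral_congr_fun measurableSet_Ioi key,
    setIntegral_indicator measurableSet_Ici]
  have hint : ∀ a : ℝ, 0 < a → ∫ r in Set.Ioi a, C * r ^ (-2:ℝ) = C * a⁻¹ := by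
    intro a ha
    rw [integral_const_mul, integral_Ioi_rpow_of_lt (by norm_num) ha]
    norm_num [Real.rpow_neg_one]
  constructor
  · by_cases hp1 : p ≤ 1
    · have hsub : Set.Ioi (1:ℝ) ∩ Set.Ici p = Set.Ioi 1 := by
        apply Set.inter_eq_left.2
        intro x hx; exact le_trans hp1 (le_of_lt hx)
      rw [hsub, hint 1 one_pos, hRHS]
      have : C * 1⁻¹ = K * p * Hbar p := by ring
      rw [this]
      nlinarith
    · push_neg at hp1
      have hsub : Set.Ioi (1:ℝ) ∩ Set.Ici p = Set.Ici p := by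
        apply Set.inter_eq_right.2
        intro x hx; exact lt_of_lt_of_le hp1 hx
      rw [hsub, integral_Ici_eq_integral_Ioi, hint p (by linarith), hRHS, hCdef]
      have hpne : p ≠ 0 := by positivity
      apply le_of_eq
      field_simp
  · rw [hRHS]
    have h1 : Hbar p ≤ 1 := by
      rw [hHbar]
      have h2 : (1 + c*p)⁻¹ * (1 + c*p) = 1 := inv_mul_cancel₀ hcp.ne'
      have h3 : 0 ≤ (1 + c*p)⁻¹ := by positivity
      nlinarith [mul_nonneg h3 (mul_nonneg hc0.le hp)]
    calc K * Hbar p ≤ K * 1 := by nlinarith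
      _ = 1/Real.log (1/(1 - q)) := by rw [hKdef]; ring
end
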